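/- An n-tuple (P_1,…,P_n) of elements of K⟨n⟩ is a cyclic gradient, i.e. there exists P ∈ K⟨n⟩ with δ_j P = P_j for all 1 ≤ j ≤ n, if and only if δ_k(Σ_{j=1}^n X_j P_j) = (N + I) P_k for every k with 1 ≤ k ≤ n, where I is the identity map of K⟨n⟩. -/

import Mathlib

/-! Setup: the free associative algebra `K⟨X_1,…,X_n⟩` realized as the monoid
algebra of the free monoid on `Fin n`, together with the partial cyclic
derivatives `δ_j`, the number operator `N` and the cyclic symmetrization `C`. -/

noncomputable section

/-- `K⟨n⟩`, the ring of polynomials in `n` noncommuting indeterminates. -/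
abbrev FreePoly (K : Type) [CommSemiring K] (n : ℕ) : Type :=
  MonoidAlgebra K (FreeMonoid (Fin n))

/-- The monomial `X_{i_1} ⋯ X_{i_p}` associated to the word `w = [i_1,…,i_p]`. -/
def mono (K : Type) [Field K] {n : ℕ} (w : List (Fin n)) : FreePoly K n :=
  MonoidAlgebra.single (FreeMonoid.ofList w) 1

/-- The indeterminate `X k`. -/
def Xvar (K : Type) [Field K] {n : ℕ} (k : Fin n) : FreePoly K n := mono K [k]

variable {K : Type} [Field K] [CharZero K] {n : ℕ}

/-- The partial cyclic derivative `δ_j = μ̃ ∘ ∂_j`: on a monomial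
`X_{i_0} ⋯ X_{i_s}` it gives `∑_{p : i_p = j} X_{i_{p+1}} ⋯ X_{i_s} X_{i_0} ⋯ X_{i_{p-1}}`. -/
def cycDeriv (j : Fin n) : FreePoly K n →ₗ[K] FreePoly K n :=
  (Finsupp.lsum K fun w => LinearMap.toSpanSingleton K _
    (∑ p : Fin (FreeMonoid.toList w).length,
      if (FreeMonoid.toList w).get p = j then
        mono K ((FreeMonoid.toList w).drop (p + 1) ++ (FreeMonoid.toList w).take p)
      else 0)) ∘ₗ (MonoidAlgebra.coeffLinearEquiv K).toLinearMap

/-- The number operator `N`, multiplying a monomial by its degree. -/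
def numOp : FreePoly K n →ₗ[K] FreePoly K n :=
  (Finsupp.lsum K fun w => LinearMap.toSpanSingleton K _
    ((FreeMonoid.toList w).length • mono K (FreeMonoid.toList w))) ∘ₗ
    (MonoidAlgebra.coeffLinearEquiv K).toLinearMap

/-- The cyclic symmetrization `C`, sending a monomial of degree `p ≥ 1` to the
sum of its `p` cyclic rotations (and `1` to `0`). -/
def cycSym : FreePoly K n →ₗ[K] FreePoly K n :=
  (Finsupp.lsum K fun w => LinearMap.toSpanSingleton K _
    (∑ p ∈ Finset.range (FreeMonoid.toList w).length,
      mono K ((FreeMonoid.toList w).rotate (p + 1)))) ∘ₗ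
    (MonoidAlgebra.coeffLinearEquiv K).toLinearMap

lemma coeffLE_single (m : FreeMonoid (Fin n)) (r : K) :
    (MonoidAlgebra.coeffLinearEquiv K).toLinearMap (MonoidAlgebra.single m r : FreePoly K n) =
      Finsupp.single m r := rfl

-- lsum at a single monomial
lemma numOp_mono (w : List (Fin n)) : numOp (mono K w) = w.length • mono K w := by
  rw [numOp, mono, LinearMap.comp_apply, coeffLE_single]; erw [Finsupp.lsum_single]
  simp [LinearMap.toSpanSingleton_apply, mono]

lemma cycSym_mono (w : List (Fin n)) :
    cycSym (mono K w) = ∑ p ∈ Finset.range w.length, mono K (w.rotate (p + 1)) := by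
  rw [cycSym, mono, LinearMap.comp_apply, coeffLE_single]; erw [Finsupp.lsum_single]
  simp [LinearMap.toSpanSingleton_apply]

lemma cycDeriv_mono (j : Fin n) (w : List (Fin n)) :
    cycDeriv j (mono K w) =
      ∑ q ∈ Finset.range w.length,
        if (w.rotate q).head? = some j then mono K ((w.rotate q).tail) else 0 := by
  rw [cycDeriv, mono, LinearMap.comp_apply, coeffLE_single]; erw [Finsupp.lsum_single]
  simp only [LinearMap.toSpanSingleton_apply, one_smul, FreeMonoid.toList_ofList]
  rw [← Fin.sum_univ_eq_sum_range
    (fun q => if (w.rotate q).head? = some j then mono K ((w.rotate q).tail) else 0)]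
  refine Finset.sum_congr rfl fun p _ => ?_
  have hrot : w.rotate p.val = w[p.val] :: (w.drop (p.val + 1) ++ w.take p.val) := by
    rw [List.rotate_eq_drop_append_take p.isLt.le, List.drop_eq_getElem_cons p.isLt,
      List.cons_append]
  rw [hrot]
  simp [List.get_eq_getElem, eq_comm]

set_option linter.unusedSectionVars false

open Fin.NatCast

lemma sum_rotate_shift {M : Type*} [AddCommMonoid M] (w : List (Fin n)) (c : ℕ)
    (g : List (Fin n) → M) :
    ∑ q ∈ Finset.range w.length, g (w.rotate (q + c)) =
      ∑ q ∈ Finset.range w.length, g (w.rotate q) := by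
  rcases Nat.eq_zero_or_pos w.length with h | h
  · simp [h]
  · have : NeZero w.length := ⟨h.ne'⟩
    rw [← Fin.sum_univ_eq_sum_range (fun q => g (w.rotate (q + c))),
      ← Fin.sum_univ_eq_sum_range (fun q => g (w.rotate q)),
      ← Equiv.sum_comp (Equiv.addRight (c : Fin w.length))
        (fun q : Fin w.length => g (w.rotate q))]
    refine Finset.sum_congr rfl fun q _ => ?_
    congr 1
    show w.rotate (q.val + c) = w.rotate ((q + (c : Fin w.length) : Fin w.length) : ℕ)
    have h1 : ((q + (c : Fin w.length) : Fin w.length) : ℕ) =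
        ((q : ℕ) + c % w.length) % w.length := by
      rw [Fin.add_def, Fin.val_natCast]
    have h2 : ((q : ℕ) + c % w.length) % w.length = ((q : ℕ) + c) % w.length := by
      conv_lhs => rw [Nat.add_mod, Nat.mod_mod_of_dvd c dvd_rfl, ← Nat.add_mod]
    rw [h1, h2, List.rotate_mod]

lemma cycDeriv_mono_rotate (j : Fin n) (w : List (Fin n)) (m : ℕ) :
    cycDeriv j (mono K (w.rotate m)) = cycDeriv j (mono K w) := by
  rw [cycDeriv_mono, cycDeriv_mono, List.length_rotate]
  simp only [List.rotate_rotate]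
  have := sum_rotate_shift (M := FreePoly K n) w m
    (fun l => if l.head? = some j then mono K l.tail else 0)
  simp only [add_comm m] at *
  exact this

lemma ext_from_mono {f g : FreePoly K n →ₗ[K] FreePoly K n}
    (h : ∀ w : List (Fin n), f (mono K w) = g (mono K w)) (Q : FreePoly K n) : f Q = g Q := by
  induction Q using MonoidAlgebra.induction_linear with
  | zero => simp
  | add a b ha hb => rw [map_add, map_add, ha, hb]
  | single a b =>
    have hab : (MonoidAlgebra.single a b : FreePoly K n) = b • mono K (FreeMonoid.toList a) := by
      rw [mono]
      show _ = b • MonoidAlgebra.single _ 1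
      rw [MonoidAlgebra.smul_single', mul_one, FreeMonoid.ofList_toList]
    rw [hab, map_smul, map_smul, h]

lemma Xvar_mul_mono (a : Fin n) (l : List (Fin n)) :
    Xvar K a * mono K l = mono K (a :: l) := by
  rw [Xvar, mono, mono, mono, MonoidAlgebra.single_mul_single, one_mul]
  rfl

lemma sum_X_cycDeriv_mono (w : List (Fin n)) :
    ∑ j : Fin n, Xvar K j * cycDeriv j (mono K w) = cycSym (mono K w) := by
  rw [cycSym_mono]
  simp only [cycDeriv_mono, Finset.mul_sum, mul_ite, mul_zero]
  rw [Finset.sum_comm, sum_rotate_shift w 1 (fun l => mono K l)]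
  refine Finset.sum_congr rfl fun q hq => ?_
  have hne : w.rotate q ≠ [] := by
    rw [Ne, List.rotate_eq_nil_iff]
    intro h0
    rw [h0] at hq
    simp at hq
  obtain ⟨a, t, hat⟩ := List.exists_cons_of_ne_nil hne
  rw [hat]
  simp [eq_comm (a := some a), Xvar_mul_mono]

lemma cycDeriv_cycSym_mono (k : Fin n) (w : List (Fin n)) :
    cycDeriv k (cycSym (mono K w)) =
      numOp (cycDeriv k (mono K w)) + cycDeriv k (mono K w) := by
  rw [cycSym_mono, map_sum,
    Finset.sum_congr rfl (fun m _ => cycDeriv_mono_rotate k w (m + 1)),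
    Finset.sum_const, Finset.card_range, cycDeriv_mono, Finset.smul_sum, map_sum,
    ← Finset.sum_add_distrib]
  refine Finset.sum_congr rfl fun q hq => ?_
  by_cases hc : (w.rotate q).head? = some k
  · rw [if_pos hc, numOp_mono]
    have hlen : w.length = (w.rotate q).tail.length + 1 := by
      have h1 : 0 < w.length := by rcases Finset.mem_range.mp hq with h; omega
      have h2 := List.length_rotate w q
      rw [List.length_tail, h2]
      omega
    rw [hlen, succ_nsmul]
  · rw [if_neg hc, map_zero, add_zero, smul_zero]

/-- Divide the degree-`p` component by `p` (degree-`0` part is killed). -/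
def invN : FreePoly K n →ₗ[K] FreePoly K n :=
  (Finsupp.lsum K fun w => LinearMap.toSpanSingleton K _
    (((FreeMonoid.toList w).length : K)⁻¹ • mono K (FreeMonoid.toList w))) ∘ₗ
    (MonoidAlgebra.coeffLinearEquiv K).toLinearMap

/-- Divide the degree-`p` component by `p + 1`. -/
def invM : FreePoly K n →ₗ[K] FreePoly K n :=
  (Finsupp.lsum K fun w => LinearMap.toSpanSingleton K _
    ((((FreeMonoid.toList w).length : K) + 1)⁻¹ • mono K (FreeMonoid.toList w))) ∘ₗ
    (MonoidAlgebra.coeffLinearEquiv K).toLinearMap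

lemma invN_mono (w : List (Fin n)) :
    invN (mono K w) = ((w.length : K))⁻¹ • mono K w := by
  rw [invN, mono, LinearMap.comp_apply, coeffLE_single]; erw [Finsupp.lsum_single]
  simp [LinearMap.toSpanSingleton_apply, mono]

lemma invM_mono (w : List (Fin n)) :
    invM (mono K w) = ((w.length : K) + 1)⁻¹ • mono K w := by
  rw [invM, mono, LinearMap.comp_apply, coeffLE_single]; erw [Finsupp.lsum_single]
  simp [LinearMap.toSpanSingleton_apply, mono]

lemma cycDeriv_invN_mono (k : Fin n) (w : List (Fin n)) :
    cycDeriv k (invN (mono K w)) = invM (cycDeriv k (mono K w)) := by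
  rw [invN_mono, map_smul, cycDeriv_mono, map_sum, Finset.smul_sum]
  refine Finset.sum_congr rfl fun q hq => ?_
  by_cases hc : (w.rotate q).head? = some k
  · rw [if_pos hc, invM_mono]
    have hlen : w.length = (w.rotate q).tail.length + 1 := by
      have h1 : q < w.length := Finset.mem_range.mp hq
      have hne : w.rotate q ≠ [] := by
        rw [Ne, List.rotate_eq_nil_iff]
        intro h0; rw [h0] at h1; simp at h1
      have h2 := List.length_rotate w q
      rw [List.length_tail, h2]
      have := List.length_pos_iff.mpr hne
      rw [List.length_rotate] at this
      omega
    rw [hlen]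
    push_cast
    ring_nf
  · rw [if_neg hc, map_zero, smul_zero]

lemma invM_numOp_add_mono (w : List (Fin n)) :
    invM (numOp (mono K w) + mono K w) = mono K w := by
  rw [numOp_mono, ← Nat.cast_smul_eq_nsmul K, map_add, map_smul, invM_mono, smul_smul,
    ← add_smul]
  rw [show (w.length : K) * ((w.length : K) + 1)⁻¹ + ((w.length : K) + 1)⁻¹
      = ((w.length : K) + 1) * ((w.length : K) + 1)⁻¹ by ring,
    mul_inv_cancel₀ (Nat.cast_add_one_ne_zero w.length), one_smul]

lemma sum_X_cycDeriv (Q : FreePoly K n) :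
    ∑ j : Fin n, Xvar K j * cycDeriv j Q = cycSym Q := by
  have := ext_from_mono
    (f := ∑ j : Fin n, (LinearMap.mulLeft K (Xvar K j)) ∘ₗ cycDeriv j) (g := cycSym)
    (fun w => by
      simpa [LinearMap.sum_apply, LinearMap.mulLeft_apply] using sum_X_cycDeriv_mono w) Q
  simpa [LinearMap.sum_apply, LinearMap.mulLeft_apply] using this

lemma cycDeriv_cycSym (k : Fin n) (Q : FreePoly K n) :
    cycDeriv k (cycSym Q) = numOp (cycDeriv k Q) + cycDeriv k Q := by
  have := ext_from_mono
    (f := (cycDeriv k) ∘ₗ cycSym) (g := numOp ∘ₗ cycDeriv k + cycDeriv k)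
    (fun w => by simpa using cycDeriv_cycSym_mono k w) Q
  simpa using this

lemma cycDeriv_invN (k : Fin n) (Q : FreePoly K n) :
    cycDeriv k (invN Q) = invM (cycDeriv k Q) := by
  have := ext_from_mono
    (f := (cycDeriv k) ∘ₗ invN) (g := invM ∘ₗ cycDeriv k)
    (fun w => by simpa using cycDeriv_invN_mono k w) Q
  simpa using this

lemma invM_numOp_add (Q : FreePoly K n) : invM (numOp Q + Q) = Q := by
  have := ext_from_mono
    (f := invM ∘ₗ (numOp + LinearMap.id)) (g := LinearMap.id)
    (fun w => by simpa using invM_numOp_add_mono w) Q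
  simpa using this

theorem isCyclicGradient_iff_cycDeriv_eq (P : Fin n → FreePoly K n) :
    (∃ Q : FreePoly K n, ∀ j : Fin n, cycDeriv j Q = P j) ↔
      ∀ k : Fin n, cycDeriv k (∑ j : Fin n, Xvar K j * P j) = numOp (P k) + P k := by
  constructor
  · rintro ⟨Q, hQ⟩ k
    have h1 : ∑ j : Fin n, Xvar K j * P j = cycSym Q := by
      rw [← sum_X_cycDeriv]
      exact Finset.sum_congr rfl fun j _ => by rw [hQ j]
    rw [h1, cycDeriv_cycSym, hQ k]
  · intro h
    refine ⟨invN (∑ j : Fin n, Xvar K j * P j), fun j => ?_⟩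
    rw [cycDeriv_invN, h j, invM_numOp_add]
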